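/- If λ₁ ≥ λ₂ > 0, then the total variation distance between the Poisson distributions satisfies d_TV(Poisson(λ₁), Poisson(λ₂)) ≤ √((1/2)·(e^{(λ₁−λ₂)²/λ₁} − 1)). -/

import Mathlib

open MeasureTheory Filter

noncomputable section

/-- Total variation distance between two measures. -/
def tvDist {α : Type*} [MeasurableSpace α] (μ ν : Measure α) : ℝ :=
  ⨆ s : Set α, |(μ s).toReal - (ν s).toReal|

/-- The Poisson distribution with mean `lam`, as a measure on `ℕ`:
`P[k] = e^{-lam} lam^k / k!`. -/
def poissonM (lam : ℝ) : Measure ℕ :=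
  Measure.sum fun k =>
    ENNReal.ofReal (Real.exp (-lam) * lam ^ k / k.factorial) • Measure.dirac k

namespace PoissonTVAux

def pmfP (lam : ℝ) (k : ℕ) : ℝ := Real.exp (-lam) * lam ^ k / k.factorial

lemma pmfP_nonneg (lam : ℝ) (hl : 0 ≤ lam) (k : ℕ) : 0 ≤ pmfP lam k := by
  unfold pmfP; positivity

lemma pmfP_pos (lam : ℝ) (hl : 0 < lam) (k : ℕ) : 0 < pmfP lam k := by
  unfold pmfP; positivity

lemma geom_exp (x : ℝ) : ∑' k : ℕ, x ^ k / k.factorial = Real.exp x := by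
  rw [Real.exp_eq_exp_ℝ, NormedSpace.exp_eq_tsum_div]

lemma pmfP_summable (lam : ℝ) : Summable (pmfP lam) := by
  unfold pmfP
  simp_rw [mul_div_assoc]
  exact (Real.summable_pow_div_factorial lam).mul_left _

lemma pmfP_tsum (lam : ℝ) : ∑' k, pmfP lam k = 1 := by
  unfold pmfP
  simp_rw [mul_div_assoc]
  rw [tsum_mul_left, geom_exp, ← Real.exp_add]
  simp

lemma poissonM_apply (lam : ℝ) (hl : 0 ≤ lam) (s : Set ℕ) :
    ((poissonM lam) s).toReal = ∑' k, s.indicator (pmfP lam) k := by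
  have hmeas : MeasurableSet s := s.to_countable.measurableSet
  rw [poissonM, Measure.sum_apply _ hmeas]
  have h1 : ∀ k : ℕ, (ENNReal.ofReal (Real.exp (-lam) * lam ^ k / k.factorial) •
      Measure.dirac k) s = ENNReal.ofReal (s.indicator (pmfP lam) k) := by
    intro k
    rw [Measure.smul_apply, Measure.dirac_apply' _ hmeas, smul_eq_mul]
    by_cases hk : k ∈ s
    · simp [Set.indicator_of_mem hk, pmfP]
    · simp [Set.indicator_of_notMem hk, hk]
  simp_rw [h1]
  rw [← ENNReal.ofReal_tsum_of_nonneg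
      (fun k => Set.indicator_nonneg (fun a _ => pmfP_nonneg lam hl a) k)
      ((pmfP_summable lam).indicator s)]
  rw [ENNReal.toReal_ofReal]
  exact tsum_nonneg (fun k => Set.indicator_nonneg (fun a _ => pmfP_nonneg lam hl a) k)

lemma tsum_cs (f g : ℕ → ℝ) (hf : Summable (fun k => f k ^ 2))
    (hg : Summable (fun k => g k ^ 2)) :
    Summable (fun k => f k * g k) ∧
    ∑' k, f k * g k ≤ Real.sqrt (∑' k, f k ^ 2) * Real.sqrt (∑' k, g k ^ 2) := by
  have hs : Summable (fun k => f k * g k) := by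
    apply Summable.of_abs
    apply Summable.of_nonneg_of_le (fun k => abs_nonneg _)
      (fun k => ?_) ((hf.add hg).div_const 2)
    rw [abs_mul]
    nlinarith [sq_nonneg (|f k| - |g k|), sq_abs (f k), sq_abs (g k)]
  refine ⟨hs, Summable.tsum_le_of_sum_le hs fun u => ?_⟩
  have hA : (0:ℝ) ≤ ∑ k ∈ u, f k ^ 2 := Finset.sum_nonneg fun k _ => sq_nonneg _
  calc ∑ k ∈ u, f k * g k
      ≤ Real.sqrt (∑ k ∈ u, f k ^ 2) * Real.sqrt (∑ k ∈ u, g k ^ 2) := by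
        refine le_trans (le_abs_self _) ?_
        rw [← Real.sqrt_mul hA]
        exact Real.abs_le_sqrt (Finset.sum_mul_sq_le_sq_mul_sq u f g)
    _ ≤ Real.sqrt (∑' k, f k ^ 2) * Real.sqrt (∑' k, g k ^ 2) :=
        mul_le_mul (Real.sqrt_le_sqrt (Summable.sum_le_tsum u (fun k _ => sq_nonneg _) hf))
          (Real.sqrt_le_sqrt (Summable.sum_le_tsum u (fun k _ => sq_nonneg _) hg))
          (Real.sqrt_nonneg _) (Real.sqrt_nonneg _)

lemma ratio_eq (lam₁ lam₂ : ℝ) (h₁ : 0 < lam₁) (k : ℕ) :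
    pmfP lam₂ k ^ 2 / pmfP lam₁ k =
      Real.exp (lam₁ - 2 * lam₂) * (lam₂ ^ 2 / lam₁) ^ k / k.factorial := by
  have hq : 0 < pmfP lam₁ k := pmfP_pos lam₁ h₁ k
  rw [div_eq_div_iff hq.ne' (by positivity : (0:ℝ) < (k.factorial:ℝ)).ne']
  unfold pmfP
  have he : Real.exp (lam₁ - 2 * lam₂) * Real.exp (-lam₁) = Real.exp (-(2 * lam₂)) := by
    rw [← Real.exp_add]; ring_nf
  rw [div_pow, mul_pow, ← Real.exp_nat_mul]
  field_simp
  rw [Nat.cast_ofNat, ← he, div_pow]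
  field_simp
  ring

end PoissonTVAux

open PoissonTVAux in
/-- For `λ₁ ≥ λ₂ > 0`,
`d_TV(Poisson(λ₁), Poisson(λ₂)) ≤ √((1/2)(e^{(λ₁-λ₂)²/λ₁} - 1))`. -/
theorem poisson_tv_bound (lam₁ lam₂ : ℝ) (h₂ : 0 < lam₂) (h₁₂ : lam₂ ≤ lam₁) :
    tvDist (poissonM lam₁) (poissonM lam₂) ≤
      Real.sqrt (1 / 2 * (Real.exp ((lam₁ - lam₂) ^ 2 / lam₁) - 1)) := by
  have h₁ : 0 < lam₁ := lt_of_lt_of_le h₂ h₁₂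
  set q₁ := pmfP lam₁ with hq₁def
  set q₂ := pmfP lam₂ with hq₂def
  set d : ℕ → ℝ := fun k => q₁ k - q₂ k with hddef
  set h : ℕ → ℝ := fun k => d k ^ 2 / q₁ k with hhdef
  set r : ℕ → ℝ := fun k =>
    Real.exp (lam₁ - 2 * lam₂) * (lam₂ ^ 2 / lam₁) ^ k / k.factorial with hrdef
  have hq₁pos : ∀ k, 0 < q₁ k := pmfP_pos lam₁ h₁
  have hq₁sum : Summable q₁ := pmfP_summable lam₁
  have hq₂sum : Summable q₂ := pmfP_summable lam₂
  have hdsum : Summable d := hq₁sum.sub hq₂sum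
  have hrsum : Summable r := by
    rw [hrdef]
    simp_rw [mul_div_assoc]
    exact (Real.summable_pow_div_factorial _).mul_left _
  -- pointwise decomposition of h
  have hpt : ∀ k, h k = q₁ k - 2 * q₂ k + q₂ k ^ 2 / q₁ k := by
    intro k
    rw [hhdef]
    have := (hq₁pos k).ne'
    field_simp
    ring
  have hratio : ∀ k, q₂ k ^ 2 / q₁ k = r k := fun k => ratio_eq lam₁ lam₂ h₁ k
  have hpt' : ∀ k, h k = q₁ k - 2 * q₂ k + r k := by
    intro k; rw [hpt k, hratio k]
  have hhsum : Summable h := by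
    have : Summable (fun k => q₁ k - 2 * q₂ k + r k) :=
      (hq₁sum.sub (hq₂sum.mul_left 2)).add hrsum
    exact this.congr fun k => (hpt' k).symm
  -- the key exponent identity
  have hexp : lam₁ - 2 * lam₂ + lam₂ ^ 2 / lam₁ = (lam₁ - lam₂) ^ 2 / lam₁ := by
    field_simp
    ring
  have hrtsum : ∑' k, r k = Real.exp ((lam₁ - lam₂) ^ 2 / lam₁) := by
    rw [hrdef]
    simp_rw [mul_div_assoc]
    rw [tsum_mul_left, geom_exp, ← Real.exp_add, hexp]
  have hchi : ∑' k, h k = Real.exp ((lam₁ - lam₂) ^ 2 / lam₁) - 1 := by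
    calc ∑' k, h k = ∑' k, (q₁ k - 2 * q₂ k + r k) := tsum_congr hpt'
      _ = (∑' k, (q₁ k - 2 * q₂ k)) + ∑' k, r k :=
          Summable.tsum_add (hq₁sum.sub (hq₂sum.mul_left 2)) hrsum
      _ = ((∑' k, q₁ k) - ∑' k, 2 * q₂ k) + ∑' k, r k := by
          rw [Summable.tsum_sub hq₁sum (hq₂sum.mul_left 2)]
      _ = Real.exp ((lam₁ - lam₂) ^ 2 / lam₁) - 1 := by
          rw [tsum_mul_left, pmfP_tsum, pmfP_tsum, hrtsum]; ring
  have hhnonneg : ∀ k, 0 ≤ h k := fun k => div_nonneg (sq_nonneg _) (hq₁pos k).le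
  -- per-set quantities
  set S : Set ℕ → ℝ := fun s => ∑' k, s.indicator d k with hSdef
  set A : Set ℕ → ℝ := fun s => ∑' k, s.indicator h k with hAdef
  have hAnonneg : ∀ s, 0 ≤ A s := fun s =>
    tsum_nonneg (fun k => Set.indicator_nonneg (fun a _ => hhnonneg a) k)
  -- Cauchy-Schwarz per set: |S s| ≤ √(A s)
  have key : ∀ s : Set ℕ, |S s| ≤ Real.sqrt (A s) := by
    intro s
    set f : ℕ → ℝ := fun k => s.indicator (fun k => d k / Real.sqrt (q₁ k)) k with hfdef
    set g : ℕ → ℝ := fun k => s.indicator (fun k => Real.sqrt (q₁ k)) k with hgdef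
    have hf2 : ∀ k, f k ^ 2 = s.indicator h k := by
      intro k
      by_cases hk : k ∈ s
      · simp only [hfdef, Set.indicator_of_mem hk, hhdef]
        rw [div_pow, Real.sq_sqrt (hq₁pos k).le]
      · simp [hfdef, Set.indicator_of_notMem hk]
    have hg2 : ∀ k, g k ^ 2 = s.indicator q₁ k := by
      intro k
      by_cases hk : k ∈ s
      · simp only [hgdef, Set.indicator_of_mem hk]
        exact Real.sq_sqrt (hq₁pos k).le
      · simp [hgdef, Set.indicator_of_notMem hk]
    have hfg : ∀ k, f k * g k = s.indicator d k := by
      intro k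
      by_cases hk : k ∈ s
      · simp only [hfdef, hgdef, Set.indicator_of_mem hk]
        rw [div_mul_cancel₀]
        exact (Real.sqrt_pos.mpr (hq₁pos k)).ne'
      · simp [hfdef, hgdef, Set.indicator_of_notMem hk]
    have hf2sum : Summable (fun k => f k ^ 2) :=
      (hhsum.indicator s).congr fun k => (hf2 k).symm
    have hg2sum : Summable (fun k => g k ^ 2) :=
      (hq₁sum.indicator s).congr fun k => (hg2 k).symm
    have hnegf2sum : Summable (fun k => (-f) k ^ 2) := by
      simpa using hf2sum
    have hAeq : ∑' k, f k ^ 2 = A s := tsum_congr hf2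
    have hPle : ∑' k, g k ^ 2 ≤ 1 := by
      calc ∑' k, g k ^ 2 = ∑' k, s.indicator q₁ k := tsum_congr hg2
        _ ≤ ∑' k, q₁ k := Summable.tsum_le_tsum
            (fun k => Set.indicator_le_self' (fun x _ => (hq₁pos x).le) k)
            (hq₁sum.indicator s) hq₁sum
        _ = 1 := pmfP_tsum lam₁
    have hsqrtP : Real.sqrt (∑' k, g k ^ 2) ≤ 1 := by
      rw [show (1:ℝ) = Real.sqrt 1 by simp]
      exact Real.sqrt_le_sqrt hPle
    have bound : ∀ F : ℕ → ℝ, (∀ k, F k ^ 2 = f k ^ 2) →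
        ∑' k, F k * g k ≤ Real.sqrt (A s) := by
      intro F hF
      have hFsum : Summable (fun k => F k ^ 2) := hf2sum.congr fun k => (hF k).symm
      obtain ⟨-, hcs⟩ := tsum_cs F g hFsum hg2sum
      calc ∑' k, F k * g k ≤ Real.sqrt (∑' k, F k ^ 2) * Real.sqrt (∑' k, g k ^ 2) := hcs
        _ ≤ Real.sqrt (A s) * 1 := by
            apply mul_le_mul _ hsqrtP (Real.sqrt_nonneg _) (Real.sqrt_nonneg _)
            rw [show (∑' k, F k ^ 2) = A s by rw [← hAeq]; exact tsum_congr hF]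
        _ = Real.sqrt (A s) := mul_one _
    have hS1 : S s ≤ Real.sqrt (A s) := by
      have := bound f (fun k => rfl)
      calc S s = ∑' k, f k * g k := (tsum_congr hfg).symm
        _ ≤ _ := this
    have hS2 : -S s ≤ Real.sqrt (A s) := by
      have hb := bound (fun k => -f k) (fun k => by ring)
      have : ∑' k, (-f k) * g k = -S s := by
        rw [hSdef]
        simp only
        rw [← tsum_neg]
        apply tsum_congr
        intro k
        rw [← hfg k]; ring
      rw [this] at hb
      exact hb
    exact abs_le.mpr ⟨by linarith, hS1⟩
  -- complement relations
  have hScompl : ∀ s : Set ℕ, S s + S sᶜ = 0 := by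
    intro s
    have : S s + S sᶜ = ∑' k, d k := by
      rw [hSdef]
      simp only
      rw [← Summable.tsum_add (hdsum.indicator s) (hdsum.indicator sᶜ)]
      apply tsum_congr
      intro k
      exact congrFun (Set.indicator_self_add_compl s d) k
    rw [this, Summable.tsum_sub hq₁sum hq₂sum, pmfP_tsum, pmfP_tsum, sub_self]
  have hAcompl : ∀ s : Set ℕ, A s + A sᶜ = Real.exp ((lam₁ - lam₂) ^ 2 / lam₁) - 1 := by
    intro s
    rw [← hchi, hAdef]
    simp only
    rw [← Summable.tsum_add (hhsum.indicator s) (hhsum.indicator sᶜ)]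
    apply tsum_congr
    intro k
    exact congrFun (Set.indicator_self_add_compl s h) k
  -- the per-set bound
  have main : ∀ s : Set ℕ, |S s| ≤
      Real.sqrt (1 / 2 * (Real.exp ((lam₁ - lam₂) ^ 2 / lam₁) - 1)) := by
    intro s
    have h1 : |S s| ≤ Real.sqrt (A s) := key s
    have h2 : |S s| ≤ Real.sqrt (A sᶜ) := by
      have := key sᶜ
      have heq : S sᶜ = -S s := by linarith [hScompl s]
      rwa [heq, abs_neg] at this
    rw [show 1 / 2 * (Real.exp ((lam₁ - lam₂) ^ 2 / lam₁) - 1)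
        = (A s + A sᶜ) / 2 by rw [hAcompl s]; ring]
    have e1 := Real.sq_sqrt (hAnonneg s)
    have e2 := Real.sq_sqrt (hAnonneg sᶜ)
    have hs1 := Real.sqrt_nonneg (A s)
    have hs2 := Real.sqrt_nonneg (A sᶜ)
    have habs : 0 ≤ |S s| := abs_nonneg _
    rw [show |S s| = Real.sqrt (|S s| ^ 2) from (Real.sqrt_sq habs).symm]
    apply Real.sqrt_le_sqrt
    nlinarith [h1, h2, sq_nonneg (Real.sqrt (A s) - Real.sqrt (A sᶜ))]
  -- conclude
  rw [tvDist]
  apply ciSup_le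
  intro s
  rw [poissonM_apply lam₁ h₁.le s, poissonM_apply lam₂ h₂.le s]
  have : (∑' k, s.indicator q₁ k) - ∑' k, s.indicator q₂ k = S s := by
    rw [hSdef]
    simp only
    rw [← Summable.tsum_sub (hq₁sum.indicator s) (hq₂sum.indicator s)]
    apply tsum_congr
    intro k
    by_cases hk : k ∈ s
    · simp [Set.indicator_of_mem hk, hddef]
    · simp [Set.indicator_of_notMem hk]
  rw [this]
  exact main s
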